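/- arXiv:2305.07091 — 3 statements merged into one kernel-verified Lean document; each statement's English description precedes it below -/
import Mathlib

section
/- Let τ(n) be a sequence of non-negative integer-valued random variables satisfying the unit growth property τ(n+1) ≤ τ(n) + 1. Suppose there exists a random variable τ̄ with E[τ̄^p] < ∞ for some p ∈ (0,1] such that P(τ̄ > m) ≥ P(τ(n) > m) for all m ≥ 0 and all n. Then for every ε ∈ (0,1), P(τ(n) > εn infinitely often) = 0. -/
open MeasureTheory Filter

theorem stmt0 {Ω : Type*} [MeasurableSpace Ω] (μ : Measure Ω) [IsProbabilityMeasure μ]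
    (τ : ℕ → Ω → ℕ) (hmeas : ∀ n, Measurable (τ n))
    (hgrowth : ∀ n ω, τ (n + 1) ω ≤ τ n ω + 1)
    (τbar : Ω → ℕ) (hbarmeas : Measurable τbar)
    (p : ℝ) (hp0 : 0 < p) (hp1 : p ≤ 1)
    (hmom : Integrable (fun ω => ((τbar ω : ℝ)) ^ p) μ)
    (hdom : ∀ n m : ℕ, μ {ω | τ n ω > m} ≤ μ {ω | τbar ω > m}) :
    ∀ ε : ℝ, 0 < ε → ε < 1 →
      μ (limsup (fun n => {ω | ((τ n ω : ℝ)) > ε * n}) atTop) = 0 := by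
  intro ε hε0 hε1
  -- growth lemma
  have hgrow : ∀ (ω : Ω) (a b : ℕ), a ≤ b → τ b ω ≤ τ a ω + (b - a) := by
    intro ω a b hab
    induction b, hab using Nat.le_induction with
    | base => simp
    | succ n hn ih =>
      have h1 := hgrowth n ω
      omega
  set γ : ℝ := 1 + ε / 2 with hγdef
  have hγ1 : 1 < γ := by simp [hγdef]; linarith
  have hγ0 : 0 < γ := by linarith
  obtain ⟨K, hK⟩ := pow_unbounded_of_one_lt (4 : ℝ) hγ1
  set q : ℕ → ℝ := fun k => γ ^ (k + K) with hqdef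
  have hq4 : ∀ k, 4 ≤ q k := by
    intro k
    have h1 : γ ^ K ≤ γ ^ (k + K) := pow_le_pow_right₀ hγ1.le (Nat.le_add_left K k)
    simp only [hqdef]
    linarith
  have hqmono : Monotone q := fun a b hab =>
    pow_le_pow_right₀ hγ1.le (by omega)
  set m : ℕ → ℕ := fun k => ⌊q k⌋₊ with hmdef
  have hm_ub : ∀ k, (m k : ℝ) ≤ q k := fun k => Nat.floor_le (by linarith [hq4 k])
  have hm_lb : ∀ k, q k - 1 < (m k : ℝ) := fun k => Nat.sub_one_lt_floor (q k)
  have hmmono : Monotone m := fun a b hab => Nat.floor_mono (hqmono hab)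
  set t : ℕ → ℝ := fun k => (1 + ε) * (m k : ℝ) - (m (k + 1) : ℝ) + 1 with htdef
  have ht : ∀ k, ε / 4 * q k ≤ t k := by
    intro k
    have h1 := hm_lb k
    have h2 := hm_ub (k + 1)
    have h3 : q (k + 1) = γ * q k := by
      simp only [hqdef]
      rw [← pow_succ']
      ring_nf
    have h4 := hq4 k
    simp only [htdef]
    rw [h3] at h2
    simp only [hγdef] at h2
    nlinarith
  have htpos : ∀ k, 0 < t k := fun k =>
    lt_of_lt_of_le (by nlinarith [hq4 k]) (ht k)
  set B : ℕ → Set Ω := fun k => {ω | (τ (m k) ω : ℝ) > t k} with hBdef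
  -- block decomposition
  have hblock : ∀ n, m 0 ≤ n → ∃ k, m k ≤ n ∧ n < m (k + 1) := by
    intro n hn
    have hex : ∃ k, n < m k := by
      obtain ⟨j, hj⟩ := pow_unbounded_of_one_lt ((n : ℝ) + 1) hγ1
      refine ⟨j + K, ?_⟩
      have : (n : ℝ) < m (j + K) := by
        have h1 := hm_lb (j + K)
        have h2 : γ ^ j ≤ q (j + K) := pow_le_pow_right₀ hγ1.le (by omega)
        linarith
      exact_mod_cast this
    classical
    set k₀ := Nat.find hex with hk₀
    have hk₀pos : 0 < k₀ := by
      rcases Nat.eq_zero_or_pos k₀ with h | h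
      · exfalso
        have := Nat.find_spec hex
        rw [← hk₀, h] at this
        omega
      · exact h
    refine ⟨k₀ - 1, ?_, ?_⟩
    · have := Nat.find_min hex (m := k₀ - 1) (by omega)
      omega
    · have := Nat.find_spec hex
      rw [← hk₀] at this
      have : n < m k₀ := this
      have hk : k₀ - 1 + 1 = k₀ := by omega
      rw [hk]
      exact this
  -- limsup inclusion
  have hsub : limsup (fun n => {ω | ((τ n ω : ℝ)) > ε * n}) atTop ⊆ limsup B atTop := by
    intro ω hω
    rw [mem_limsup_iff_frequently_mem] at hω ⊢
    rw [frequently_atTop] at hω ⊢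
    intro K'
    obtain ⟨n, hn, hA⟩ := hω (max (m 0) (m K'))
    obtain ⟨k, hk1, hk2⟩ := hblock n (le_trans (le_max_left _ _) hn)
    have hKk : K' ≤ k := by
      by_contra h
      push_neg at h
      have h1 : m (k + 1) ≤ m K' := hmmono (by omega)
      have h2 : m K' ≤ n := le_trans (le_max_right _ _) hn
      omega
    refine ⟨k, hKk, ?_⟩
    -- pointwise
    have h1 : τ n ω ≤ τ (m k) ω + (n - m k) := hgrow ω (m k) n hk1
    have h2 : ((n : ℝ) - m k) = ((n - m k : ℕ) : ℝ) := by
      rw [Nat.cast_sub hk1]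
    have h3 : (τ n ω : ℝ) ≤ (τ (m k) ω : ℝ) + ((n : ℝ) - m k) := by
      rw [h2]
      exact_mod_cast h1
    have h4 : ε * (m k : ℝ) ≤ ε * n := by
      have : (m k : ℝ) ≤ n := by exact_mod_cast hk1
      nlinarith
    have h5 : (n : ℝ) ≤ (m (k + 1) : ℝ) - 1 := by
      have : n + 1 ≤ m (k + 1) := hk2
      have := (Nat.cast_le (α := ℝ)).2 this
      push_cast at this
      linarith
    have hAn : (τ n ω : ℝ) > ε * n := hA
    show (τ (m k) ω : ℝ) > t k
    simp only [htdef]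
    linarith
  -- Borel-Cantelli part
  set g : Ω → ENNReal := fun ω => ENNReal.ofReal ((τbar ω : ℝ) ^ p) with hgdef
  have hgmeas : Measurable g := by
    apply Measurable.ennreal_ofReal
    exact (Real.continuous_rpow_const hp0.le).measurable.comp
      (measurable_from_top.comp hbarmeas : Measurable fun ω => ((τbar ω : ℕ) : ℝ))
  set L : ENNReal := ∫⁻ ω, g ω ∂μ with hLdef
  have hLlt : L < ⊤ := by
    have hfi : (∫⁻ ω, (‖(τbar ω : ℝ) ^ p‖₊ : ENNReal) ∂μ) < ⊤ := hmom.hasFiniteIntegral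
    refine lt_of_le_of_lt (lintegral_mono fun ω => ?_) hfi
    have hnn : 0 ≤ (τbar ω : ℝ) ^ p := Real.rpow_nonneg (Nat.cast_nonneg _) p
    rw [hgdef]
    simp only
    rw [← Real.enorm_eq_ofReal hnn]
    exact le_rfl
  have hmarkov : ∀ N : ℕ, μ {ω | τbar ω > N} ≤ L / ENNReal.ofReal (((N : ℝ) + 1) ^ p) := by
    intro N
    have hsub2 : {ω | τbar ω > N} ⊆ {ω | ENNReal.ofReal (((N : ℝ) + 1) ^ p) ≤ g ω} := by
      intro ω hω
      have h1 : (N : ℝ) + 1 ≤ (τbar ω : ℝ) := by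
        have : N + 1 ≤ τbar ω := hω
        exact_mod_cast this
      have h2 : ((N : ℝ) + 1) ^ p ≤ (τbar ω : ℝ) ^ p :=
        Real.rpow_le_rpow (by positivity) h1 hp0.le
      exact ENNReal.ofReal_le_ofReal h2
    refine le_trans (measure_mono hsub2) ?_
    exact meas_ge_le_lintegral_div hgmeas.aemeasurable
      (by simp [ENNReal.ofReal_eq_zero]; positivity)
      ENNReal.ofReal_ne_top
  have hBbound : ∀ k, μ (B k) ≤ L / ENNReal.ofReal ((t k) ^ p) := by
    intro k
    have hsub3 : B k ⊆ {ω | τ (m k) ω > ⌊t k⌋₊} := by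
      intro ω hω
      have : t k < (τ (m k) ω : ℝ) := hω
      exact (Nat.floor_lt (htpos k).le).2 this
    refine le_trans (measure_mono hsub3) (le_trans (hdom _ _) (le_trans (hmarkov _) ?_))
    apply ENNReal.div_le_div_left
    apply ENNReal.ofReal_le_ofReal
    exact Real.rpow_le_rpow (htpos k).le (Nat.lt_floor_add_one (t k)).le hp0.le
  set c : ℝ := ε / 4 * γ ^ K with hcdef
  have hc0 : 0 < c := by positivity
  have htc : ∀ k, c * γ ^ k ≤ t k := by
    intro k
    have h1 := ht k
    have : ε / 4 * q k = c * γ ^ k := by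
      simp only [hqdef, hcdef]
      rw [pow_add]
      ring
    linarith [this ▸ h1]
  set r : ENNReal := (ENNReal.ofReal (γ ^ p))⁻¹ with hrdef
  have hγp1 : 1 < γ ^ p := (Real.one_lt_rpow_iff_of_pos hγ0).2 (Or.inl ⟨hγ1, hp0⟩)
  have hr1 : r < 1 := by
    rw [hrdef, ENNReal.inv_lt_one]
    exact ENNReal.one_lt_ofReal.2 hγp1
  set a : ENNReal := L / ENNReal.ofReal (c ^ p) with hadef
  have halt : a < ⊤ := ENNReal.div_lt_top hLlt.ne (by simp [ENNReal.ofReal_eq_zero]; positivity)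
  have hBk : ∀ k, μ (B k) ≤ a * r ^ k := by
    intro k
    refine le_trans (hBbound k) ?_
    have h1 : (c * γ ^ k) ^ p = c ^ p * (γ ^ p) ^ k := by
      rw [Real.mul_rpow hc0.le (by positivity)]
      congr 1
      rw [← Real.rpow_natCast γ k, ← Real.rpow_natCast (γ ^ p) k,
        ← Real.rpow_mul hγ0.le, ← Real.rpow_mul hγ0.le, mul_comm]
    have h2 : ENNReal.ofReal (c ^ p) * ENNReal.ofReal (γ ^ p) ^ k ≤ ENNReal.ofReal ((t k) ^ p) := by
      rw [← ENNReal.ofReal_pow (by positivity), ← ENNReal.ofReal_mul (by positivity), ← h1]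
      exact ENNReal.ofReal_le_ofReal
        (Real.rpow_le_rpow (by positivity) (htc k) hp0.le)
    calc L / ENNReal.ofReal ((t k) ^ p)
        ≤ L / (ENNReal.ofReal (c ^ p) * ENNReal.ofReal (γ ^ p) ^ k) :=
          ENNReal.div_le_div_left h2 L
      _ = a * r ^ k := by
          rw [hadef, hrdef, div_eq_mul_inv, div_eq_mul_inv,
            ENNReal.mul_inv (Or.inl (by simp [ENNReal.ofReal_eq_zero]; positivity))
              (Or.inl ENNReal.ofReal_ne_top),
            ENNReal.inv_pow, mul_assoc]
  have hsum : ∑' k, μ (B k) ≠ ⊤ := by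
    refine ne_top_of_le_ne_top ?_ (ENNReal.tsum_le_tsum hBk)
    rw [ENNReal.tsum_mul_left, ENNReal.tsum_geometric]
    apply ENNReal.mul_ne_top halt.ne
    rw [Ne, ENNReal.inv_eq_top, tsub_eq_zero_iff_le]
    exact not_le.2 hr1
  have hBC : μ (limsup B atTop) = 0 := measure_limsup_atTop_eq_zero hsum
  exact le_antisymm (le_trans (measure_mono hsub) hBC.le) zero_le
end

section
/- Under the hypotheses of the Gronwall-type inequality with varying lower limit (y_n ≤ b_n c_n + C Σ_{k=n-Δ_n}^{n-1} a_k y_k, sup b_n ≤ B, c_n monotone increasing, and the averaging condition), if additionally b_n → 0 and Σ_{k=n-Δ_n}^{n-1} a_k → 0 as n → ∞, then y_n / c_n → 0. -/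
open Finset Filter

theorem stmt4 (y a b c : ℕ → ℝ) (Δ : ℕ → ℕ) (C B : ℝ)
    (hy : ∀ n, 0 ≤ y n) (ha : ∀ n, 0 ≤ a n) (hb : ∀ n, 0 ≤ b n)
    (hc : ∀ n, 0 ≤ c n) (hcmono : Monotone c) (hC : 0 < C) (hB : 0 < B)
    (t : ℕ → ℝ) (ht : ∀ n, t n = ∑ i ∈ Finset.Ico 1 n, a i)
    (hrec : ∀ n, y n ≤ b n * c n + C * ∑ k ∈ Finset.Ico (n - Δ n) n, a k * y k)
    (hbB : ∀ n, b n ≤ B)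
    (N : ℕ)
    (hN : ∀ n ≥ N, C * ∑ k ∈ Finset.Ico (n - Δ n) n, a k ≤
        (Real.exp (C * t N) - 1) / Real.exp (C * t N))
    (hb0 : Tendsto b atTop (nhds 0))
    (hS0 : Tendsto (fun n => ∑ k ∈ Finset.Ico (n - Δ n) n, a k) atTop (nhds 0)) :
    Tendsto (fun n => y n / c n) atTop (nhds 0) := by
  set E : ℝ := Real.exp (C * t N) with hEdef
  have hE0 : 0 < E := Real.exp_pos _
  have htN0 : 0 ≤ t N := by
    rw [ht]; exact Finset.sum_nonneg fun i _ => ha i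
  have hE1 : (1:ℝ) ≤ E := Real.one_le_exp (by positivity)
  -- telescoping identity
  have tel : ∀ n, (1:ℝ) + ∑ k ∈ Finset.range n, C * a k * ∏ j ∈ Finset.range k, (1 + C * a j)
      = ∏ k ∈ Finset.range n, (1 + C * a k) := by
    intro n
    induction n with
    | zero => simp
    | succ n ih =>
      rw [Finset.sum_range_succ, Finset.prod_range_succ, ← ih]; ring
  have hfac : ∀ k, (1:ℝ) ≤ 1 + C * a k := fun k => by
    have := mul_nonneg hC.le (ha k); linarith
  -- crude Gronwall bound
  have lemA : ∀ n, y n ≤ B * (∏ k ∈ Finset.range n, (1 + C * a k)) * c n := by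
    intro n
    induction n using Nat.strong_induction_on with
    | _ n ih =>
      have hsub : Finset.Ico (n - Δ n) n ⊆ Finset.range n := by
        intro k hk
        simp only [Finset.mem_Ico, Finset.mem_range] at *
        exact hk.2
      have step1 : ∑ k ∈ Finset.Ico (n - Δ n) n, a k * y k
          ≤ ∑ k ∈ Finset.range n, a k * y k :=
        Finset.sum_le_sum_of_subset_of_nonneg hsub
          (fun k _ _ => mul_nonneg (ha k) (hy k))
      have step2 : ∑ k ∈ Finset.range n, a k * y k
          ≤ ∑ k ∈ Finset.range n, a k * (B * (∏ j ∈ Finset.range k, (1 + C * a j)) * c n) := by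
        apply Finset.sum_le_sum
        intro k hk
        have hk' : k < n := Finset.mem_range.mp hk
        have h1 : y k ≤ B * (∏ j ∈ Finset.range k, (1 + C * a j)) * c k := ih k hk'
        have h2 : B * (∏ j ∈ Finset.range k, (1 + C * a j)) * c k
            ≤ B * (∏ j ∈ Finset.range k, (1 + C * a j)) * c n := by
          apply mul_le_mul_of_nonneg_left (hcmono hk'.le)
          exact mul_nonneg hB.le (Finset.prod_nonneg fun j _ => by linarith [hfac j])
        exact mul_le_mul_of_nonneg_left (h1.trans h2) (ha k)
      calc y n ≤ b n * c n + C * ∑ k ∈ Finset.Ico (n - Δ n) n, a k * y k := hrec n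
        _ ≤ B * c n + C * ∑ k ∈ Finset.range n, a k * (B * (∏ j ∈ Finset.range k, (1 + C * a j)) * c n) := by
            have hb' : b n * c n ≤ B * c n := mul_le_mul_of_nonneg_right (hbB n) (hc n)
            have := mul_le_mul_of_nonneg_left (step1.trans step2) hC.le
            linarith
        _ = B * c n + (∑ k ∈ Finset.range n, C * a k * ∏ j ∈ Finset.range k, (1 + C * a j)) * (B * c n) := by
            rw [Finset.mul_sum, Finset.sum_mul]
            congr 1
            exact Finset.sum_congr rfl fun k _ => by ring
        _ = B * ((1:ℝ) + ∑ k ∈ Finset.range n, C * a k * ∏ j ∈ Finset.range k, (1 + C * a j)) * c n := by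
            ring
        _ = B * (∏ k ∈ Finset.range n, (1 + C * a k)) * c n := by rw [tel]
  set M : ℝ := max (B * ∏ k ∈ Finset.range N, (1 + C * a k)) (B * E) with hMdef
  have hM0 : 0 ≤ M := le_trans (by positivity) (le_max_right _ _)
  have hMBE : B * E ≤ M := le_max_right _ _
  -- uniform bound
  have lemB : ∀ n, y n ≤ M * c n := by
    intro n
    induction n using Nat.strong_induction_on with
    | _ n ih =>
      by_cases hn : n ≤ N
      · have hpos : ∀ m, (0:ℝ) < ∏ k ∈ Finset.range m, (1 + C * a k) :=
          fun m => Finset.prod_pos fun k _ => lt_of_lt_of_le one_pos (hfac k)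
        have hmono : Monotone fun m => ∏ k ∈ Finset.range m, (1 + C * a k) := by
          apply monotone_nat_of_le_succ
          intro m
          simp only [Finset.prod_range_succ]
          exact le_mul_of_one_le_right (hpos m).le (hfac m)
        have h1 : ∏ k ∈ Finset.range n, (1 + C * a k) ≤ ∏ k ∈ Finset.range N, (1 + C * a k) :=
          hmono hn
        calc y n ≤ B * (∏ k ∈ Finset.range n, (1 + C * a k)) * c n := lemA n
          _ ≤ B * (∏ k ∈ Finset.range N, (1 + C * a k)) * c n := by
              apply mul_le_mul_of_nonneg_right _ (hc n)
              exact mul_le_mul_of_nonneg_left h1 hB.le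
          _ ≤ M * c n := mul_le_mul_of_nonneg_right (le_max_left _ _) (hc n)
      · push_neg at hn
        have hnN : N ≤ n := hn.le
        have key : ∑ k ∈ Finset.Ico (n - Δ n) n, a k * y k
            ≤ (∑ k ∈ Finset.Ico (n - Δ n) n, a k) * (M * c n) := by
          rw [Finset.sum_mul]
          apply Finset.sum_le_sum
          intro k hk
          have hk' : k < n := (Finset.mem_Ico.mp hk).2
          have h1 : y k ≤ M * c k := ih k hk'
          have h2 : M * c k ≤ M * c n := mul_le_mul_of_nonneg_left (hcmono hk'.le) hM0
          exact mul_le_mul_of_nonneg_left (h1.trans h2) (ha k)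
        have hMc : 0 ≤ M * c n := mul_nonneg hM0 (hc n)
        have step : C * ∑ k ∈ Finset.Ico (n - Δ n) n, a k * y k
            ≤ ((E - 1) / E) * (M * c n) := by
          calc C * ∑ k ∈ Finset.Ico (n - Δ n) n, a k * y k
              ≤ C * ((∑ k ∈ Finset.Ico (n - Δ n) n, a k) * (M * c n)) :=
                mul_le_mul_of_nonneg_left key hC.le
            _ = (C * ∑ k ∈ Finset.Ico (n - Δ n) n, a k) * (M * c n) := by ring
            _ ≤ ((E - 1) / E) * (M * c n) :=
                mul_le_mul_of_nonneg_right (hN n hnN) hMc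
        have hfinal : B * c n + ((E - 1) / E) * (M * c n) ≤ M * c n := by
          have h1 : B ≤ M / E := (le_div_iff₀ hE0).mpr (by linarith [hMBE])
          have h2 : ((E - 1) / E) * M = M - M / E := by field_simp
          have h3 : B + ((E - 1) / E) * M ≤ M := by rw [h2]; linarith
          calc B * c n + ((E - 1) / E) * (M * c n)
              = (B + ((E - 1) / E) * M) * c n := by ring
            _ ≤ M * c n := mul_le_mul_of_nonneg_right h3 (hc n)
        have hb' : b n * c n ≤ B * c n := mul_le_mul_of_nonneg_right (hbB n) (hc n)
        calc y n ≤ b n * c n + C * ∑ k ∈ Finset.Ico (n - Δ n) n, a k * y k := hrec n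
          _ ≤ B * c n + ((E - 1) / E) * (M * c n) := by linarith
          _ ≤ M * c n := hfinal
  -- squeeze
  have hS_nonneg : ∀ n, 0 ≤ ∑ k ∈ Finset.Ico (n - Δ n) n, a k :=
    fun n => Finset.sum_nonneg fun k _ => ha k
  apply squeeze_zero' (Eventually.of_forall fun n => div_nonneg (hy n) (hc n))
    (g := fun n => b n + C * M * ∑ k ∈ Finset.Ico (n - Δ n) n, a k)
  · filter_upwards [eventually_ge_atTop N] with n hn
    have key : ∑ k ∈ Finset.Ico (n - Δ n) n, a k * y k
        ≤ (∑ k ∈ Finset.Ico (n - Δ n) n, a k) * (M * c n) := by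
      rw [Finset.sum_mul]
      apply Finset.sum_le_sum
      intro k hk
      have hk' : k < n := (Finset.mem_Ico.mp hk).2
      have h1 : y k ≤ M * c k := lemB k
      have h2 : M * c k ≤ M * c n := mul_le_mul_of_nonneg_left (hcmono hk'.le) hM0
      exact mul_le_mul_of_nonneg_left (h1.trans h2) (ha k)
    have h1 : y n ≤ (b n + C * M * ∑ k ∈ Finset.Ico (n - Δ n) n, a k) * c n := by
      have := mul_le_mul_of_nonneg_left key hC.le
      have h2 := hrec n
      nlinarith
    have hRnn : 0 ≤ b n + C * M * ∑ k ∈ Finset.Ico (n - Δ n) n, a k := by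
      have := hS_nonneg n
      have := hb n
      positivity
    rcases eq_or_lt_of_le (hc n) with h | h
    · have hcz : c n = 0 := h.symm
      rw [hcz, div_zero]
      exact hRnn
    · exact (div_le_iff₀ h).mpr h1
  · have h := hb0.add ((hS0.const_mul (C * M)))
    simpa using h
end

section
/- Let τ(n) be integers with 0 ≤ τ(n) ≤ n and suppose for some p ∈ (0,1] and constants C > 0, ε ∈ (0,1), N ∈ ℕ: τ(k^{1/p}) ≤ ε k^{1/p} for all integers k ≥ N (interpreting k^{1/p} as ⌊k^{1/p}⌋), and τ satisfies the unit growth property τ(n+1) ≤ τ(n) + 1. Then there exist C' > 0 and N' such that τ(n) ≤ εn + (1-ε) C' n^{1-p} for all n ≥ N'. -/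
open Real

lemma stmt19_growth (τ : ℕ → ℕ) (hgrowth : ∀ n, τ (n + 1) ≤ τ n + 1) :
    ∀ m i, τ (m + i) ≤ τ m + i := by
  intro m i
  induction i with
  | zero => simp
  | succ j ih => calc τ (m + (j+1)) = τ ((m+j)+1) := by ring_nf
    _ ≤ τ (m+j) + 1 := hgrowth _
    _ ≤ τ m + j + 1 := by omega

theorem stmt19 (τ : ℕ → ℕ) (hτn : ∀ n, τ n ≤ n)
    (p : ℝ) (hp0 : 0 < p) (hp1 : p ≤ 1)
    (C : ℝ) (hC : 0 < C) (ε : ℝ) (hε0 : 0 < ε) (hε1 : ε < 1) (N : ℕ)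
    (hsub : ∀ k : ℕ, N ≤ k →
      (τ ⌊((k : ℝ) ^ (1 / p))⌋₊ : ℝ) ≤ ε * (⌊((k : ℝ) ^ (1 / p))⌋₊ : ℝ))
    (hgrowth : ∀ n, τ (n + 1) ≤ τ n + 1) :
    ∃ C' : ℝ, 0 < C' ∧ ∃ N' : ℕ, ∀ n : ℕ, N' ≤ n →
      (τ n : ℝ) ≤ ε * n + (1 - ε) * C' * (n : ℝ) ^ (1 - p) := by
  set a : ℝ := 1 / p with ha_def
  have ha1 : 1 ≤ a := one_le_one_div hp0 hp1
  have ha0 : 0 < a := lt_of_lt_of_le one_pos ha1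
  have hap : a * p = 1 := one_div_mul_cancel hp0.ne'
  refine ⟨a * 2 ^ (a - 1) + 1, by positivity, ⟨⌈((max N 1 + 1 : ℕ) : ℝ) ^ a⌉₊ + 1, ?_⟩⟩
  intro n hn
  have hn1 : 1 ≤ n := le_trans (Nat.le_add_left 1 _) hn
  have hn0 : (0:ℝ) < n := by exact_mod_cast hn1
  -- k := ⌊n^p⌋
  set k : ℕ := ⌊(n : ℝ) ^ p⌋₊ with hk_def
  have hnp0 : (0:ℝ) ≤ (n:ℝ) ^ p := rpow_nonneg hn0.le p
  have hkn : (k : ℝ) ≤ (n:ℝ) ^ p := Nat.floor_le hnp0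
  have hnk : (n:ℝ) ^ p < k + 1 := Nat.lt_floor_add_one _
  -- k ≥ max N 1
  have hkN : max N 1 + 1 ≤ k := by
    have h1 : ((max N 1 + 1 : ℕ) : ℝ) ^ a ≤ (n : ℝ) := by
      calc ((max N 1 + 1 : ℕ) : ℝ) ^ a ≤ ⌈((max N 1 + 1 : ℕ) : ℝ) ^ a⌉₊ := Nat.le_ceil _
        _ ≤ n := by exact_mod_cast le_trans (Nat.le_succ _) hn
    have h2 : ((max N 1 + 1 : ℕ) : ℝ) ≤ (n : ℝ) ^ p := by
      have h3 := rpow_le_rpow (by positivity) h1 hp0.le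
      rwa [← rpow_mul (by positivity) a p, hap, rpow_one] at h3
    exact Nat.le_floor h2
  have hk1 : 1 ≤ k := by omega
  have hk0 : (0:ℝ) < k := by exact_mod_cast hk1
  -- m := ⌊k^a⌋
  set m : ℕ := ⌊((k : ℝ) ^ a)⌋₊ with hm_def
  have hka0 : (0:ℝ) ≤ (k:ℝ) ^ a := rpow_nonneg hk0.le a
  have hm_le : (m : ℝ) ≤ (k:ℝ) ^ a := Nat.floor_le hka0
  have hm_ge : (k:ℝ) ^ a - 1 < m := Nat.sub_one_lt_floor _
  have hka_le_n : (k:ℝ) ^ a ≤ n := by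
    have := rpow_le_rpow (Nat.cast_nonneg k) hkn ha0.le
    rwa [← rpow_mul hn0.le, mul_comm, hap, rpow_one] at this
  have hmn : m ≤ n := by
    have : (m:ℝ) ≤ (n:ℝ) := le_trans hm_le hka_le_n
    exact_mod_cast this
  have hn_lt : (n:ℝ) < ((k:ℝ) + 1) ^ a := by
    have h := rpow_lt_rpow hnp0 hnk ha0
    rwa [← rpow_mul hn0.le, mul_comm, hap, rpow_one] at h
  -- Bernoulli: (k+1)^a - k^a ≤ a * (k+1)^(a-1)
  have hk1R : (0:ℝ) < (k:ℝ) + 1 := by positivity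
  have hbern : ((k:ℝ)+1) ^ a - (k:ℝ) ^ a ≤ a * ((k:ℝ)+1) ^ (a - 1) := by
    have hs : (-1:ℝ) ≤ -(1/((k:ℝ)+1)) := by
      rw [neg_le_neg_iff]
      exact div_le_one_of_le₀ (by linarith) hk1R.le
    have hb := one_add_mul_self_le_rpow_one_add hs ha1
    have heq : (1 + -(1/((k:ℝ)+1))) = (k:ℝ) / ((k:ℝ)+1) := by field_simp; ring
    rw [heq, div_rpow hk0.le hk1R.le] at hb
    have hpow : ((k:ℝ)+1) ^ a > 0 := rpow_pos_of_pos hk1R a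
    have hb2 : (1 + a * -(1/((k:ℝ)+1))) * ((k:ℝ)+1)^a ≤ (k:ℝ)^a :=
      (le_div_iff₀ hpow).mp hb
    have hsub1 : ((k:ℝ)+1) ^ (a-1) = ((k:ℝ)+1)^a / ((k:ℝ)+1) := by
      rw [rpow_sub hk1R, rpow_one]
    rw [hsub1]
    have : (1 + a * -(1/((k:ℝ)+1))) * ((k:ℝ)+1)^a
        = ((k:ℝ)+1)^a - a * (((k:ℝ)+1)^a / ((k:ℝ)+1)) := by field_simp; ring
    linarith [this ▸ hb2]
  -- (k+1)^(a-1) ≤ 2^(a-1) * k^(a-1)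
  have hgap2 : ((k:ℝ)+1) ^ (a-1) ≤ 2 ^ (a-1) * (k:ℝ) ^ (a-1) := by
    have h2k : (k:ℝ)+1 ≤ 2 * k := by
      have : (1:ℝ) ≤ k := by exact_mod_cast hk1
      linarith
    calc ((k:ℝ)+1) ^ (a-1) ≤ (2*(k:ℝ)) ^ (a-1) :=
          rpow_le_rpow hk1R.le h2k (by linarith)
      _ = 2 ^ (a-1) * (k:ℝ) ^ (a-1) := mul_rpow (by norm_num) hk0.le
  -- k^(a-1) ≤ n^(1-p)
  have hkan : (k:ℝ) ^ (a-1) ≤ (n:ℝ) ^ (1-p) := by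
    have h := rpow_le_rpow hk0.le hkn (by linarith : (0:ℝ) ≤ a - 1)
    have heq : ((n:ℝ)^p) ^ (a-1) = (n:ℝ) ^ (1-p) := by
      rw [← rpow_mul hn0.le]
      congr 1
      have : p * (a - 1) = a * p - p := by ring
      rw [this, hap]
    rwa [heq] at h
  have hone : (1:ℝ) ≤ (n:ℝ) ^ (1-p) := one_le_rpow (by exact_mod_cast hn1) (by linarith)
  -- gap: n - m ≤ (a * 2^(a-1) + 1) * n^(1-p)
  have hgap : ((n:ℝ) - m) ≤ (a * 2 ^ (a-1) + 1) * (n:ℝ) ^ (1-p) := by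
    have h1 : (n:ℝ) - m ≤ a * ((k:ℝ)+1)^(a-1) + 1 := by
      have := hn_lt
      nlinarith
    have h2 : a * ((k:ℝ)+1)^(a-1) ≤ a * 2^(a-1) * (n:ℝ)^(1-p) := by
      calc a * ((k:ℝ)+1)^(a-1) ≤ a * (2^(a-1) * (k:ℝ)^(a-1)) := by
            exact mul_le_mul_of_nonneg_left hgap2 ha0.le
        _ ≤ a * (2^(a-1) * (n:ℝ)^(1-p)) := by
            apply mul_le_mul_of_nonneg_left _ ha0.le
            exact mul_le_mul_of_nonneg_left hkan (by positivity)
        _ = a * 2^(a-1) * (n:ℝ)^(1-p) := by ring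
    calc (n:ℝ) - m ≤ a * ((k:ℝ)+1)^(a-1) + 1 := h1
      _ ≤ a * 2^(a-1) * (n:ℝ)^(1-p) + 1 * (n:ℝ)^(1-p) := by
          have := hone; linarith
      _ = (a * 2 ^ (a-1) + 1) * (n:ℝ) ^ (1-p) := by ring
  -- τ n ≤ τ m + (n - m) ≤ ε m + (n - m)
  have hτnm : (τ n : ℝ) ≤ ε * m + ((n:ℝ) - m) := by
    have h1 : τ n ≤ τ m + (n - m) := by
      have := stmt19_growth τ hgrowth m (n - m)
      rwa [Nat.add_sub_cancel' hmn] at this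
    have h2 : (τ m : ℝ) ≤ ε * m := hsub k (le_trans (le_max_left N 1) (by omega))
    have h3 : ((n - m : ℕ) : ℝ) = (n:ℝ) - m := by
      rw [Nat.cast_sub hmn]
    calc (τ n : ℝ) ≤ (τ m : ℝ) + ((n - m : ℕ) : ℝ) := by exact_mod_cast h1
      _ ≤ ε * m + ((n:ℝ) - m) := by rw [h3]; linarith
  have hmlen : (m:ℝ) ≤ (n:ℝ) := by exact_mod_cast hmn
  calc (τ n : ℝ) ≤ ε * m + ((n:ℝ) - m) := hτnm
    _ = ε * n + (1 - ε) * ((n:ℝ) - m) := by ring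
    _ ≤ ε * n + (1 - ε) * ((a * 2 ^ (a-1) + 1) * (n:ℝ) ^ (1-p)) := by
        have h := mul_le_mul_of_nonneg_left hgap (by linarith : (0:ℝ) ≤ 1 - ε)
        linarith
    _ = ε * n + (1 - ε) * (a * 2 ^ (a-1) + 1) * (n:ℝ) ^ (1-p) := by ring
end
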